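/- Let a_1, a_2, a_3, a_4, a_5 > 0 satisfy a_2 > a_5 and 2·a_1·a_2 < a_3·(a_2 − a_5). Define v[u] = a_4·u·(a_2+u)/((a_5+u)·(a_1·a_2 + a_3·u)). Then v has a unique positive critical point u_0, given explicitly by u_0 = a_1·a_2·a_5/(a_3·(a_2−a_5) − a_1·a_2) + a_2·√(a_1·a_5)·√((a_3−a_1)·(a_2−a_5))/(a_3·(a_2−a_5) − a_1·a_2), and v'[u] < 0 for all u > u_0. -/

import Mathlib

set_option maxHeartbeats 1000000


theorem stmt_1 (a1 a2 a3 a4 a5 : ℝ) (h1 : 0 < a1) (h2 : 0 < a2) (h3 : 0 < a3)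
    (h4 : 0 < a4) (h5 : 0 < a5) (h25 : a5 < a2)
    (hcd : 2 * a1 * a2 < a3 * (a2 - a5)) :
    ∃ u0 : ℝ,
      u0 = a1 * a2 * a5 / (a3 * (a2 - a5) - a1 * a2)
          + a2 * Real.sqrt (a1 * a5) * Real.sqrt ((a3 - a1) * (a2 - a5))
            / (a3 * (a2 - a5) - a1 * a2) ∧
      0 < u0 ∧
      deriv (fun s : ℝ => a4 * s * (a2 + s) / ((a5 + s) * (a1 * a2 + a3 * s))) u0 = 0 ∧
      (∀ u : ℝ, 0 < u →
        deriv (fun s : ℝ => a4 * s * (a2 + s) / ((a5 + s) * (a1 * a2 + a3 * s))) u = 0 →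
        u = u0) ∧
      (∀ u : ℝ, u0 < u →
        deriv (fun s : ℝ => a4 * s * (a2 + s) / ((a5 + s) * (a1 * a2 + a3 * s))) u < 0) := by
  have hA : 0 < a3 * (a2 - a5) - a1 * a2 := by nlinarith
  set A : ℝ := a3 * (a2 - a5) - a1 * a2 with hAdef
  set r : ℝ := Real.sqrt (a1 * a5) * Real.sqrt ((a3 - a1) * (a2 - a5)) with hrdef
  have h31 : a1 < a3 := by nlinarith
  have hx : (0:ℝ) ≤ a1 * a5 := by positivity
  have hy : (0:ℝ) ≤ (a3 - a1) * (a2 - a5) := by nlinarith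
  have hr0 : 0 ≤ r := mul_nonneg (Real.sqrt_nonneg _) (Real.sqrt_nonneg _)
  have hr2 : r ^ 2 = a1 * a5 * ((a3 - a1) * (a2 - a5)) := by
    rw [hrdef, mul_pow, Real.sq_sqrt hx, Real.sq_sqrt hy]
  have hXgt : a1 * a5 < (a3 - a1) * (a2 - a5) := by nlinarith
  have hrgt : a1 * a5 < r := by
    nlinarith [hr2, mul_pos h1 h5, hXgt, hr0]
  set u0 : ℝ := (a1 * a2 * a5 + a2 * r) / A with hu0def
  have hu0A : A * u0 = a1 * a2 * a5 + a2 * r := by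
    rw [hu0def]; field_simp
  have hu0pos : 0 < u0 := by
    apply div_pos _ hA
    have : 0 < a2 * r := by nlinarith [mul_pos h1 h5]
    nlinarith [mul_pos (mul_pos h1 h2) h5]
  have hQ0 : -(A * u0 ^ 2) + 2 * a1 * a2 * a5 * u0 + a1 * a2 ^ 2 * a5 = 0 := by
    have hAQ : A * (-(A * u0 ^ 2) + 2 * a1 * a2 * a5 * u0 + a1 * a2 ^ 2 * a5) = 0 := by
      have hx2 : -(A * u0) ^ 2 + 2 * a1 * a2 * a5 * (A * u0) + A * (a1 * a2 ^ 2 * a5) = 0 := by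
        rw [hu0A, hAdef]
        linear_combination (-(a2 ^ 2)) * hr2
      linear_combination hx2
    rcases mul_eq_zero.1 hAQ with h | h
    · exact absurd h hA.ne'
    · exact h
  have hderiv : ∀ u : ℝ, 0 < u →
      deriv (fun s : ℝ => a4 * s * (a2 + s) / ((a5 + s) * (a1 * a2 + a3 * s))) u
        = a4 * (-(A * u ^ 2) + 2 * a1 * a2 * a5 * u + a1 * a2 ^ 2 * a5)
          / ((a5 + u) * (a1 * a2 + a3 * u)) ^ 2 := by
    intro u hu
    have hd1 : (0:ℝ) < a5 + u := by linarith
    have hd2 : (0:ℝ) < a1 * a2 + a3 * u := by nlinarith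
    have hDne : (a5 + u) * (a1 * a2 + a3 * u) ≠ 0 := by positivity
    have hN1 : HasDerivAt (fun s : ℝ => a4 * s) a4 u := by
      simpa using (hasDerivAt_id u).const_mul a4
    have hN2 : HasDerivAt (fun s : ℝ => a2 + s) 1 u := by
      simpa using (hasDerivAt_id u).const_add a2
    have hD1 : HasDerivAt (fun s : ℝ => a5 + s) 1 u := by
      simpa using (hasDerivAt_id u).const_add a5
    have hD2 : HasDerivAt (fun s : ℝ => a1 * a2 + a3 * s) a3 u := by
      simpa using ((hasDerivAt_id u).const_mul a3).const_add (a1 * a2)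
    have hd := ((hN1.mul hN2).div (hD1.mul hD2) hDne).deriv
    simp only [Pi.mul_def, Pi.div_def] at hd
    rw [hd, hAdef]
    congr 1
    ring
  refine ⟨u0, ?_, hu0pos, ?_, ?_, ?_⟩
  · rw [hu0def, hrdef]; ring
  · rw [hderiv u0 hu0pos, hQ0]
    simp
  · intro u hu hdu
    rw [hderiv u hu] at hdu
    have hd1 : (0:ℝ) < a5 + u := by linarith
    have hd2 : (0:ℝ) < a1 * a2 + a3 * u := by nlinarith
    have hD2ne : ((a5 + u) * (a1 * a2 + a3 * u)) ^ 2 ≠ 0 := by positivity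
    have hQu : -(A * u ^ 2) + 2 * a1 * a2 * a5 * u + a1 * a2 ^ 2 * a5 = 0 := by
      rcases div_eq_zero_iff.1 hdu with h | h
      · rcases mul_eq_zero.1 h with h' | h'
        · exact absurd h' h4.ne'
        · exact h'
      · exact absurd h hD2ne
    have hfac : (A * u - (a1 * a2 * a5 + a2 * r)) * (A * u - (a1 * a2 * a5 - a2 * r)) = 0 := by
      rw [hAdef]
      rw [hAdef] at hQu
      linear_combination (-(a3 * (a2 - a5) - a1 * a2)) * hQu + (-(a2 ^ 2)) * hr2
    rcases mul_eq_zero.1 hfac with h | h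
    · have : A * u = A * u0 := by rw [hu0A]; linarith
      exact mul_left_cancel₀ hA.ne' this
    · exfalso
      have hAu : 0 < A * u := mul_pos hA hu
      nlinarith [mul_lt_mul_of_pos_left hrgt h2]
  · intro u hu
    have hupos : 0 < u := hu0pos.trans hu
    rw [hderiv u hupos]
    have hd1 : (0:ℝ) < a5 + u := by linarith
    have hd2 : (0:ℝ) < a1 * a2 + a3 * u := by nlinarith
    apply div_neg_of_neg_of_pos _ (by positivity)
    have hr' : 2 * a1 * a2 * a5 < A * u0 := by
      rw [hu0A]; nlinarith [mul_lt_mul_of_pos_left hrgt h2]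
    have hAu : A * u0 < A * u := mul_lt_mul_of_pos_left hu hA
    have h3' : 0 < A * (u + u0) - 2 * a1 * a2 * a5 := by
      nlinarith [mul_pos hA hupos]
    have hfin : -(A * u ^ 2) + 2 * a1 * a2 * a5 * u + a1 * a2 ^ 2 * a5 < 0 := by
      nlinarith [mul_pos (sub_pos.2 hu) h3']
    exact mul_neg_of_pos_of_neg h4 hfin
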